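/- Let A be a hyperbolic linear automorphism of ℝ^N (splitting E^s ⊕ E^u with exponential contraction/expansion constants C, η ∈ (0,1)) and let z_k := lim_{j→∞}(A^{−j} y_{k+j})^u + lim_{j→∞}(A^j y_{k−j})^s be the shadowing point of the shifted pseudo-orbit (y_{k+i})_i, for a pseudo-orbit (y_k)_{k∈ℤ} with bounded b_k = y_{k+1} − A y_k. Then z_{k+1} = A z_k for all k ∈ ℤ. -/

import Mathlib

/-- The shadowing construction intertwines the shift on pseudo-orbits with
the action of the hyperbolic automorphism A: if z k is the shadowing point of the
shifted pseudo-orbit (y (k+·)), defined by the stable/unstable limit formulas, then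
z (k+1) = A (z k). -/
theorem hyperbolic_shadowing_shift {N : ℕ}
    (A : (Fin N → ℝ) ≃ₗ[ℝ] (Fin N → ℝ))
    (Es Eu : Submodule ℝ (Fin N → ℝ))
    (hcompl : IsCompl Es Eu)
    (hAs : ∀ z ∈ Es, A z ∈ Es) (hAu : ∀ z ∈ Eu, A z ∈ Eu)
    (πs πu : (Fin N → ℝ) →ₗ[ℝ] (Fin N → ℝ))
    (hπs : ∀ v, πs v ∈ Es) (hπu : ∀ v, πu v ∈ Eu)
    (hsplit : ∀ v, πs v + πu v = v)
    (C η : ℝ) (hC : 0 < C) (hη0 : 0 < η) (hη1 : η < 1)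
    (hs : ∀ z ∈ Es, ∀ k : ℕ, ‖(A ^ k : (Fin N → ℝ) ≃ₗ[ℝ] (Fin N → ℝ)) z‖ ≤ C * η ^ k * ‖z‖)
    (hu : ∀ z ∈ Eu, ∀ k : ℕ, ‖(A ^ (-(k : ℤ)) : (Fin N → ℝ) ≃ₗ[ℝ] (Fin N → ℝ)) z‖ ≤ C * η ^ k * ‖z‖)
    (y : ℤ → Fin N → ℝ)
    (hb : ∃ B : ℝ, ∀ k : ℤ, ‖y (k + 1) - A (y k)‖ ≤ B)
    (zu zs z : ℤ → Fin N → ℝ)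
    (hzu : ∀ k : ℤ, Filter.Tendsto (fun j : ℕ =>
        πu ((A ^ (-(j : ℤ)) : (Fin N → ℝ) ≃ₗ[ℝ] (Fin N → ℝ)) (y (k + (j : ℤ)))))
        Filter.atTop (nhds (zu k)))
    (hzs : ∀ k : ℤ, Filter.Tendsto (fun j : ℕ =>
        πs ((A ^ (j : ℤ) : (Fin N → ℝ) ≃ₗ[ℝ] (Fin N → ℝ)) (y (k - (j : ℤ)))))
        Filter.atTop (nhds (zs k)))
    (hz : ∀ k : ℤ, z k = zu k + zs k) :
    ∀ k : ℤ, z (k + 1) = A (z k) := by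

  -- A commutes with the projections
  have hcomm : ∀ v, πu (A v) = A (πu v) ∧ πs (A v) = A (πs v) := by
    intro v
    have h1 : πs (A v) + πu (A v) = A (πs v) + A (πu v) := by
      rw [hsplit, ← map_add, hsplit]
    have h2 : πs (A v) - A (πs v) = A (πu v) - πu (A v) := by
      rw [sub_eq_sub_iff_add_eq_add, add_comm (A (πu v))]
      exact h1
    have hmemS : πs (A v) - A (πs v) ∈ Es :=
      Submodule.sub_mem _ (hπs _) (hAs _ (hπs v))
    have hmemU : πs (A v) - A (πs v) ∈ Eu := by
      rw [h2]; exact Submodule.sub_mem _ (hAu _ (hπu v)) (hπu _)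
    have hzero : πs (A v) - A (πs v) = 0 :=
      Submodule.disjoint_def.mp hcompl.disjoint _ hmemS hmemU
    have hzero2 : A (πu v) - πu (A v) = 0 := by rw [← h2]; exact hzero
    exact ⟨(sub_eq_zero.mp hzero2).symm, sub_eq_zero.mp hzero⟩
  have hcommU : ∀ v, πu (A v) = A (πu v) := fun v => (hcomm v).1
  have hcommS : ∀ v, πs (A v) = A (πs v) := fun v => (hcomm v).2
  have hAc : Continuous (A : (Fin N → ℝ) → (Fin N → ℝ)) :=
    LinearMap.continuous_of_finiteDimensional (A : (Fin N → ℝ) →ₗ[ℝ] (Fin N → ℝ))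
  intro k
  -- unstable part
  have hAzu : Filter.Tendsto (fun j : ℕ =>
      A (πu ((A ^ (-(j : ℤ)) : (Fin N → ℝ) ≃ₗ[ℝ] (Fin N → ℝ)) (y (k + (j : ℤ))))))
      Filter.atTop (nhds (A (zu k))) :=
    ((hAc.tendsto (zu k)).comp (hzu k))
  have hAzu' : Filter.Tendsto (fun j : ℕ =>
      A (πu ((A ^ (-((j : ℤ) + 1)) : (Fin N → ℝ) ≃ₗ[ℝ] (Fin N → ℝ)) (y (k + ((j : ℤ) + 1))))))
      Filter.atTop (nhds (A (zu k))) := by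
    have := hAzu.comp (Filter.tendsto_add_atTop_nat 1)
    convert this using 2 with j
    all_goals (simp only [Function.comp_apply]; push_cast; try ring_nf; try rfl)
  have hequ : (fun j : ℕ =>
      A (πu ((A ^ (-((j : ℤ) + 1)) : (Fin N → ℝ) ≃ₗ[ℝ] (Fin N → ℝ)) (y (k + ((j : ℤ) + 1))))))
      = (fun j : ℕ =>
      πu ((A ^ (-(j : ℤ)) : (Fin N → ℝ) ≃ₗ[ℝ] (Fin N → ℝ)) (y (k + 1 + (j : ℤ))))) := by
    funext j
    rw [← hcommU]
    have harg : k + ((j : ℤ) + 1) = k + 1 + (j : ℤ) := by ring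
    rw [harg]
    congr 1
    have hpow : (A ^ (-(j : ℤ)) : (Fin N → ℝ) ≃ₗ[ℝ] (Fin N → ℝ))
        = A * (A ^ (-((j : ℤ) + 1)) : (Fin N → ℝ) ≃ₗ[ℝ] (Fin N → ℝ)) := by
      have h1 : -(j : ℤ) = 1 + -((j : ℤ) + 1) := by ring
      rw [h1, zpow_add, zpow_one]
    rw [hpow]
    rfl
  rw [hequ] at hAzu'
  have hzu1 : zu (k + 1) = A (zu k) := tendsto_nhds_unique (hzu (k + 1)) hAzu'
  -- stable part
  have hAzs : Filter.Tendsto (fun j : ℕ =>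
      A (πs ((A ^ ((j : ℤ)) : (Fin N → ℝ) ≃ₗ[ℝ] (Fin N → ℝ)) (y (k - (j : ℤ))))))
      Filter.atTop (nhds (A (zs k))) :=
    ((hAc.tendsto (zs k)).comp (hzs k))
  have heqs : (fun j : ℕ =>
      A (πs ((A ^ ((j : ℤ)) : (Fin N → ℝ) ≃ₗ[ℝ] (Fin N → ℝ)) (y (k - (j : ℤ))))))
      = (fun j : ℕ =>
      πs ((A ^ (((j : ℤ) + 1)) : (Fin N → ℝ) ≃ₗ[ℝ] (Fin N → ℝ)) (y (k + 1 - ((j : ℤ) + 1))))) := by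
    funext j
    rw [← hcommS]
    have harg : k + 1 - ((j : ℤ) + 1) = k - (j : ℤ) := by ring
    rw [harg]
    congr 1
    have hpow : (A ^ ((j : ℤ) + 1) : (Fin N → ℝ) ≃ₗ[ℝ] (Fin N → ℝ))
        = A * (A ^ ((j : ℤ)) : (Fin N → ℝ) ≃ₗ[ℝ] (Fin N → ℝ)) := by
      have h1 : (j : ℤ) + 1 = 1 + (j : ℤ) := by ring
      rw [h1, zpow_add, zpow_one]
    rw [hpow]
    rfl
  rw [heqs] at hAzs
  have hAzs'' : Filter.Tendsto (fun j : ℕ =>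
      πs ((A ^ (((j : ℤ) + 1)) : (Fin N → ℝ) ≃ₗ[ℝ] (Fin N → ℝ)) (y (k + 1 - ((j : ℤ) + 1)))))
      Filter.atTop (nhds (zs (k + 1))) := by
    have := (hzs (k + 1)).comp (Filter.tendsto_add_atTop_nat 1)
    convert this using 2 with j
    all_goals (simp only [Function.comp_apply]; push_cast; try ring_nf; try rfl)
  have hzs1 : zs (k + 1) = A (zs k) := tendsto_nhds_unique hAzs'' hAzs
  rw [hz, hz, hzu1, hzs1, ← map_add]
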